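/- Let m be a positive integer. The congruence x² + x + 1 ≡ 0 (mod m) has an integer solution if and only if m is odd, 9 does not divide m, and for every prime p > 3 dividing m, −3 is a quadratic residue modulo p. -/

import Mathlib

/-- `a` is a quadratic residue modulo the prime `p`: `p ∤ a` and `x² ≡ a (mod p)`
is solvable. -/
def IsQuadraticResidue (a : ℤ) (p : ℕ) : Prop :=
  ¬ (p : ℤ) ∣ a ∧ ∃ x : ℤ, Int.ModEq p (x ^ 2) a

private lemma solvable_iff (m : ℕ) [NeZero m] :
    (∃ x : ℤ, Int.ModEq m (x ^ 2 + x + 1) 0) ↔ ∃ y : ZMod m, y ^ 2 + y + 1 = 0 := by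
  constructor
  · rintro ⟨x, hx⟩
    refine ⟨(x : ZMod m), ?_⟩
    have : ((x ^ 2 + x + 1 : ℤ) : ZMod m) = ((0 : ℤ) : ZMod m) :=
      (ZMod.intCast_eq_intCast_iff _ _ _).2 hx
    push_cast at this
    push_cast
    exact this
  · rintro ⟨y, hy⟩
    refine ⟨(y.val : ℤ), ?_⟩
    rw [Int.ModEq]
    have h : (((y.val : ℤ) ^ 2 + (y.val : ℤ) + 1 : ℤ) : ZMod m) = 0 := by
      push_cast
      rw [ZMod.natCast_val, ZMod.cast_id]
      exact hy
    have := (ZMod.intCast_zmod_eq_zero_iff_dvd _ m).1 h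
    exact (Int.modEq_zero_iff_dvd).mpr this

private lemma not_dvd_three {p : ℕ} (hp : p.Prime) (h3 : 3 < p) : ¬ (p : ℤ) ∣ 3 := by
  intro h
  have : p ∣ 3 := by exact_mod_cast Int.ofNat_dvd.mp (by exact_mod_cast h)
  have := Nat.le_of_dvd (by norm_num) this
  omega

/-- base case: a solution mod p from QR -/
private lemma base_case {p : ℕ} (hp : p.Prime) (h3 : 3 < p)
    (hqr : IsQuadraticResidue (-3) p) : ∃ x : ℤ, (p : ℤ) ∣ x ^ 2 + x + 1 := by
  haveI : Fact p.Prime := ⟨hp⟩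
  obtain ⟨-, y, hy⟩ := hqr
  have hy' : ((y : ZMod p)) ^ 2 = (-3 : ZMod p) := by
    have := (ZMod.intCast_eq_intCast_iff _ _ _).2 hy
    push_cast at this
    exact this
  have h2 : (2 : ZMod p) ≠ 0 := by
    have : ¬ (p : ℤ) ∣ 2 := by
      intro h
      have : p ∣ 2 := by exact_mod_cast h
      have := Nat.le_of_dvd (by norm_num) this
      omega
    intro h
    apply this
    have : ((2 : ℤ) : ZMod p) = 0 := by push_cast; exact h
    exact (ZMod.intCast_zmod_eq_zero_iff_dvd _ p).1 this
  set z : ℤ := ((((y - 1 : ℤ) : ZMod p) * (2 : ZMod p)⁻¹).val : ℤ) with hz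
  refine ⟨z, ?_⟩
  have hzc : ((z : ZMod p)) = ((y - 1 : ℤ) : ZMod p) * (2 : ZMod p)⁻¹ := by
    rw [hz]
    push_cast
    rw [ZMod.natCast_val, ZMod.cast_id]
  have key : ((2 * z + 1 : ℤ) : ZMod p) = ((y : ℤ) : ZMod p) := by
    have e1 : ((2 * z + 1 : ℤ) : ZMod p) = 2 * (z : ZMod p) + 1 := by push_cast; ring
    rw [e1, hzc, mul_comm (((y - 1 : ℤ) : ZMod p)) _, ← mul_assoc,
      mul_inv_cancel₀ h2, one_mul]
    push_cast
    ring
  have h4 : (4 : ZMod p) ≠ 0 := by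
    intro h
    apply h2
    have : (2 : ZMod p) * 2 = 0 := by rw [← h]; norm_num
    rcases mul_eq_zero.1 this with h | h <;> exact h
  have : ((4 * (z ^ 2 + z + 1) : ℤ) : ZMod p) = 0 := by
    have expand : (4 * (z ^ 2 + z + 1) : ℤ) = (2 * z + 1) ^ 2 + 3 := by ring
    rw [expand]
    push_cast
    have : ((2 * z + 1 : ℤ) : ZMod p) ^ 2 = (y : ZMod p) ^ 2 := by rw [key]
    push_cast at this
    rw [this, hy']
    ring
  have h40 : ((4 : ZMod p)) * ((z ^ 2 + z + 1 : ℤ) : ZMod p) = 0 := by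
    push_cast at this ⊢
    linear_combination this
  rcases mul_eq_zero.1 h40 with h | h
  · exact absurd h h4
  · exact (ZMod.intCast_zmod_eq_zero_iff_dvd _ p).1 h

/-- Hensel lifting -/
private lemma lift_step {p : ℕ} (hp : p.Prime) (h3 : 3 < p) (k : ℕ) (hk : 1 ≤ k)
    (x : ℤ) (hx : (p : ℤ) ^ k ∣ x ^ 2 + x + 1) :
    ∃ x' : ℤ, (p : ℤ) ^ (k + 1) ∣ x' ^ 2 + x' + 1 := by
  haveI : Fact p.Prime := ⟨hp⟩
  obtain ⟨u, hu⟩ := hx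
  have hpx : (p : ℤ) ∣ x ^ 2 + x + 1 :=
    dvd_trans (dvd_pow_self _ (by omega)) ⟨u, hu⟩
  have hder : ((2 * x + 1 : ℤ) : ZMod p) ≠ 0 := by
    intro h
    have hdvd : (p : ℤ) ∣ 2 * x + 1 := (ZMod.intCast_zmod_eq_zero_iff_dvd _ p).1 h
    have : (p : ℤ) ∣ 3 := by
      have : (3 : ℤ) = 4 * (x ^ 2 + x + 1) - (2 * x + 1) ^ 2 := by ring
      rw [this]
      exact dvd_sub (Dvd.dvd.mul_left hpx 4) (dvd_pow hdvd (by norm_num))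
    exact not_dvd_three hp h3 this
  set t : ℤ := (((-(u : ZMod p)) * ((2 * x + 1 : ℤ) : ZMod p)⁻¹).val : ℤ) with ht
  have htc : ((t : ZMod p)) = (-(u : ZMod p)) * ((2 * x + 1 : ℤ) : ZMod p)⁻¹ := by
    rw [ht]; push_cast; rw [ZMod.natCast_val, ZMod.cast_id]
  have hkey : (p : ℤ) ∣ u + t * (2 * x + 1) := by
    rw [← ZMod.intCast_zmod_eq_zero_iff_dvd]
    have e1 : ((u + t * (2 * x + 1) : ℤ) : ZMod p)
        = (u : ZMod p) + (t : ZMod p) * ((2 * x + 1 : ℤ) : ZMod p) := by push_cast; ring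
    have hd : (2 * (x : ZMod p) + 1) ≠ 0 := by push_cast at hder; exact hder
    rw [e1, htc]
    push_cast
    field_simp [hd]
    ring
  refine ⟨x + (p : ℤ) ^ k * t, ?_⟩
  have expand : (x + (p:ℤ) ^ k * t) ^ 2 + (x + (p:ℤ) ^ k * t) + 1
      = (x ^ 2 + x + 1) + (p:ℤ) ^ k * t * (2 * x + 1) + ((p:ℤ) ^ k) ^ 2 * t ^ 2 := by ring
  rw [expand, hu]
  have h1 : (p : ℤ) ^ (k + 1) ∣ (p:ℤ) ^ k * u + (p:ℤ) ^ k * t * (2 * x + 1) := by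
    have : (p:ℤ) ^ k * u + (p:ℤ) ^ k * t * (2 * x + 1) = (p:ℤ) ^ k * (u + t * (2 * x + 1)) := by
      ring
    rw [this, pow_succ]
    exact mul_dvd_mul_left _ hkey
  have h2 : (p : ℤ) ^ (k + 1) ∣ ((p:ℤ) ^ k) ^ 2 * t ^ 2 := by
    have : (p:ℤ) ^ (k+1) ∣ ((p:ℤ)^k)^2 := by
      rw [← pow_mul]
      exact pow_dvd_pow _ (by omega)
    exact this.mul_right _
  exact dvd_add h1 h2

private lemma prime_pow_case {p : ℕ} (hp : p.Prime) (h3 : 3 < p)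
    (hqr : IsQuadraticResidue (-3) p) (k : ℕ) (hk : 0 < k) :
    ∃ x : ℤ, (p : ℤ) ^ k ∣ x ^ 2 + x + 1 := by
  induction k with
  | zero => omega
  | succ n ih =>
    rcases Nat.eq_zero_or_pos n with h | h
    · subst h
      obtain ⟨x, hx⟩ := base_case hp h3 hqr
      exact ⟨x, by simpa using hx⟩
    · obtain ⟨x, hx⟩ := ih h
      exact lift_step hp h3 n h x hx

private lemma backward : ∀ n : ℕ, 0 < n → Odd n → ¬ (9 ∣ n) →
    (∀ p : ℕ, p.Prime → 3 < p → p ∣ n → IsQuadraticResidue (-3) p) →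
    ∃ y : ZMod n, y ^ 2 + y + 1 = 0 := by
  intro n
  induction n using Nat.recOnPosPrimePosCoprime with
  | prime_pow p k hp hk =>
    intro _ hodd h9 hqr
    rcases lt_trichotomy p 3 with h | h | h
    · exfalso
      have hp2 : p = 2 := by have := hp.two_le; omega
      subst hp2
      have hd : 2 ∣ 2 ^ k := dvd_pow_self 2 hk.ne'
      rw [Nat.odd_iff] at hodd
      omega
    · subst h
      have hk1 : k = 1 := by
        by_contra hne
        exact h9 (by convert pow_dvd_pow 3 (show 2 ≤ k by omega) using 1 <;> rfl)
      subst hk1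
      exact ⟨1, by decide⟩
    · have hqrp := hqr p hp h (dvd_pow_self p hk.ne')
      obtain ⟨x, hx⟩ := prime_pow_case hp h hqrp k hk
      haveI : NeZero (p ^ k) := ⟨pow_ne_zero k hp.pos.ne'⟩
      refine ⟨(x : ZMod (p ^ k)), ?_⟩
      have h0 : ((x ^ 2 + x + 1 : ℤ) : ZMod (p ^ k)) = 0 :=
        (ZMod.intCast_zmod_eq_zero_iff_dvd _ _).2 (by push_cast; exact hx)
      push_cast at h0
      exact h0
  | zero => intro h; omega
  | one => intro _ _ _ _; exact ⟨0, by decide⟩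
  | coprime a b ha hb hco iha ihb =>
    intro hpos hodd h9 hqr
    rw [Nat.odd_mul] at hodd
    obtain ⟨ya, hya⟩ := iha (by omega) hodd.1 (fun hd => h9 (hd.mul_right b))
      (fun p pp h3 hd => hqr p pp h3 (hd.mul_right b))
    obtain ⟨yb, hyb⟩ := ihb (by omega) hodd.2 (fun hd => h9 (hd.mul_left a))
      (fun p pp h3 hd => hqr p pp h3 (hd.mul_left a))
    let e := ZMod.chineseRemainder hco
    refine ⟨e.symm (ya, yb), ?_⟩
    have h1 : e.symm ((ya, yb) ^ 2 + (ya, yb) + 1)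
        = e.symm (ya, yb) ^ 2 + e.symm (ya, yb) + 1 := by
      rw [map_add, map_add, map_pow, map_one]
    have h2 : ((ya, yb) ^ 2 + (ya, yb) + 1 : ZMod a × ZMod b) = 0 := by
      rw [Prod.ext_iff]
      constructor
      · simpa using hya
      · simpa using hyb
    rw [← h1, h2, map_zero]

theorem stmt_6 (m : ℕ) (hm : 0 < m) :
    (∃ x : ℤ, Int.ModEq m (x ^ 2 + x + 1) 0) ↔
    (Odd m ∧ ¬ (9 ∣ m) ∧
      ∀ p : ℕ, p.Prime → 3 < p → p ∣ m → IsQuadraticResidue (-3) p) := by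
  haveI : NeZero m := ⟨hm.ne'⟩
  constructor
  · rintro ⟨x, hx⟩
    have hdvd : (m : ℤ) ∣ x ^ 2 + x + 1 := (Int.modEq_zero_iff_dvd).mp hx
    refine ⟨?_, ?_, ?_⟩
    · rw [Nat.odd_iff]
      by_contra h
      have h2 : 2 ∣ m := Nat.dvd_of_mod_eq_zero (by omega)
      have hdd : (2 : ℤ) ∣ x ^ 2 + x + 1 :=
        dvd_trans (by exact_mod_cast Int.natCast_dvd_natCast.2 h2) hdvd
      obtain ⟨r, hr⟩ := Int.even_mul_succ_self x
      obtain ⟨c, hc⟩ := hdd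
      have hxx : x ^ 2 + x = x * (x + 1) := by ring
      omega
    · intro h9
      have hdd : ((9 : ℕ) : ℤ) ∣ x ^ 2 + x + 1 :=
        dvd_trans (Int.natCast_dvd_natCast.2 h9) hdvd
      have hz : ((x : ZMod 9)) ^ 2 + (x : ZMod 9) + 1 = 0 := by
        have := (ZMod.intCast_zmod_eq_zero_iff_dvd (x ^ 2 + x + 1) 9).2 hdd
        push_cast at this
        exact this
      have hall : ∀ y : ZMod 9, y ^ 2 + y + 1 ≠ 0 := by decide
      exact hall _ hz
    · intro p hp hp3 hpm
      have hpd : (p : ℤ) ∣ x ^ 2 + x + 1 := dvd_trans (Int.natCast_dvd_natCast.2 hpm) hdvd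
      refine ⟨fun h => not_dvd_three hp hp3 ((dvd_neg).1 h), ⟨2 * x + 1, ?_⟩⟩
      have hsub : (-3 : ℤ) - (2 * x + 1) ^ 2 = -4 * (x ^ 2 + x + 1) := by ring
      exact (Int.modEq_iff_dvd).2 (by rw [hsub]; exact Dvd.dvd.mul_left hpd (-4))
  · rintro ⟨hodd, h9, hqr⟩
    rw [solvable_iff]
    exact backward m hm hodd h9 hqr
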